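/- Let C and (T,D,X) be random variables with C independent of (T,D,X) given a discrete random variable Z, and suppose G(s|z) := P(C > s | Z = z) satisfies G(t-|z) > 0 for all z in the support of Z, for a fixed t > 0. Define W = 1{C ≥ T ∧ t} / G((T ∧ t)- | Z). Then E(W | T, D, X, Z) = 1 almost surely. -/

import Mathlib

open MeasureTheory ProbabilityTheory Set
open scoped ENNReal

/-- With `C ⟂ (T,D,X) | Z` (Z discrete) and `G(t-|z) = P(C ≥ t | Z=z) > 0`
on the support of `Z`, the IPC weight `W = 1{C ≥ T∧t} / G((T∧t)-|Z)` satisfies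
`E(W | T, D, X, Z) = 1` a.s. -/
theorem ipcw_weight_cond_exp_one
    {Ω E F : Type*} [MeasurableSpace Ω] [MeasurableSpace E] [MeasurableSpace F]
    {ι : Type*} [MeasurableSpace ι] [MeasurableSingletonClass ι] [Countable ι]
    (μ : Measure Ω) [IsProbabilityMeasure μ]
    (C T : Ω → ℝ) (D : Ω → E) (X : Ω → F) (Z : Ω → ι)
    (hC : Measurable C) (hT : Measurable T) (hD : Measurable D)
    (hX : Measurable X) (hZ : Measurable Z)
    (hCpos : ∀ ω, 0 < C ω) (hTpos : ∀ ω, 0 < T ω)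
    (t : ℝ) (ht : 0 < t)
    -- conditional independence given Z: within each stratum of positive probability,
    -- C is independent of (T, D, X)
    (hindep : ∀ z : ι, 0 < μ (Z ⁻¹' {z}) →
      IndepFun C (fun ω => (T ω, D ω, X ω)) (μ[|Z ⁻¹' {z}]))
    -- positivity: G(t-|z) = P(C ≥ t | Z = z) > 0 on the support of Z
    (hpos : ∀ z : ι, 0 < μ (Z ⁻¹' {z}) → 0 < (μ[|Z ⁻¹' {z}]) {ω | t ≤ C ω}) :
    μ[(fun ω =>
        (if min (T ω) t ≤ C ω then (1 : ℝ) else 0) /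
          ((μ[|Z ⁻¹' {Z ω}]) {ω' | min (T ω) t ≤ C ω'}).toReal)
      | MeasurableSpace.comap (fun ω => (T ω, D ω, X ω, Z ω)) inferInstance]
      =ᵐ[μ] fun _ => (1 : ℝ) := by
  classical
  set Y : Ω → ℝ × E × F := fun ω => (T ω, D ω, X ω) with hY_def
  have hYm : Measurable Y := hT.prodMk (hD.prodMk hX)
  set V : Ω → ℝ × E × F × ι := fun ω => (T ω, D ω, X ω, Z ω) with hV_def
  have hVm : Measurable V := hT.prodMk (hD.prodMk (hX.prodMk hZ))
  have hm : MeasurableSpace.comap V inferInstance ≤ ‹MeasurableSpace Ω› := hVm.comap_le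
  -- the conditional survival function
  set g : ℝ × ι → ℝ≥0∞ := fun p => (μ[|Z ⁻¹' {p.2}]) {ω' | p.1 ≤ C ω'} with hg_def
  have hganti : ∀ z : ι, Antitone fun s => g (s, z) := fun z s₁ s₂ h =>
    measure_mono fun ω hω => le_trans h hω
  have hgmeas : Measurable g := measurable_from_prod_countable_left fun z => (hganti z).measurable
  have hgle : ∀ p : ℝ × ι, g p ≤ 1 := fun p => by
    by_cases hz : μ (Z ⁻¹' {p.2}) = 0
    · simp [hg_def, cond_eq_zero_of_meas_eq_zero hz]
    · haveI : IsProbabilityMeasure (μ[|Z ⁻¹' {p.2}]) := cond_isProbabilityMeasure hz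
      exact prob_le_one
  have hgpos : ∀ z : ι, μ (Z ⁻¹' {z}) ≠ 0 → ∀ s : ℝ, s ≤ t → g (s, z) ≠ 0 := by
    intro z hz s hs
    have h1 : 0 < (μ[|Z ⁻¹' {z}]) {ω | t ≤ C ω} := hpos z (pos_iff_ne_zero.mpr hz)
    have h2 : g (t, z) ≤ g (s, z) := hganti z hs
    exact ne_of_gt (lt_of_lt_of_le h1 h2)
  -- the ENNReal-valued weight
  set W : Ω → ℝ≥0∞ := fun ω => if min (T ω) t ≤ C ω then (g (min (T ω) t, Z ω))⁻¹ else 0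
    with hW_def
  have hWm : Measurable W := by
    refine Measurable.ite (measurableSet_le (hT.min measurable_const) hC) ?_ measurable_const
    exact (hgmeas.comp ((hT.min measurable_const).prodMk hZ)).inv
  -- the real weight equals toReal of W
  have hfW : (fun ω => (if min (T ω) t ≤ C ω then (1 : ℝ) else 0) /
      ((μ[|Z ⁻¹' {Z ω}]) {ω' | min (T ω) t ≤ C ω'}).toReal) = fun ω => (W ω).toReal := by
    funext ω
    show (if min (T ω) t ≤ C ω then (1 : ℝ) else 0) / (g (min (T ω) t, Z ω)).toReal
      = (W ω).toReal
    show _ = (if min (T ω) t ≤ C ω then (g (min (T ω) t, Z ω))⁻¹ else 0).toReal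
    by_cases h : min (T ω) t ≤ C ω
    · rw [if_pos h, if_pos h, one_div, ENNReal.toReal_inv]
    · rw [if_neg h, if_neg h, zero_div, ENNReal.toReal_zero]
  -- the key integral identity
  have key : ∀ s : Set Ω, MeasurableSet[MeasurableSpace.comap V inferInstance] s →
      ∫⁻ ω in s, W ω ∂μ = μ s := by
    rintro s ⟨A, hA, rfl⟩
    set S : ι → Set Ω := fun z => V ⁻¹' A ∩ Z ⁻¹' {z} with hS_def
    have hSm : ∀ z, MeasurableSet (S z) := fun z =>
      (hVm hA).inter (hZ (measurableSet_singleton z))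
    have hSd : Pairwise (Function.onFun Disjoint S) := by
      intro z z' hzz'
      refine Set.disjoint_left.mpr fun ω hω hω' => hzz' ?_
      have h1 : Z ω = z := hω.2
      have h2 : Z ω = z' := hω'.2
      rw [← h1, ← h2]
    have hUnion : V ⁻¹' A = ⋃ z : ι, S z := by
      ext ω; simp [hS_def]
    have hstrat : ∀ z : ι, ∫⁻ ω in S z, W ω ∂μ = μ (S z) := by
      intro z
      by_cases hz : μ (Z ⁻¹' {z}) = 0
      · have h0 : μ (S z) = 0 := measure_mono_null inter_subset_right hz
        rw [Measure.restrict_eq_zero.mpr h0, lintegral_zero_measure, h0]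
      · set ν : Measure Ω := μ[|Z ⁻¹' {z}] with hν_def
        have hzpos : 0 < μ (Z ⁻¹' {z}) := pos_iff_ne_zero.mpr hz
        have hzfin : μ (Z ⁻¹' {z}) ≠ ∞ := measure_ne_top μ _
        haveI : IsProbabilityMeasure ν := cond_isProbabilityMeasure hz
        have hPzm : MeasurableSet (Z ⁻¹' {z}) := hZ (measurableSet_singleton z)
        have hνc : ν ((Z ⁻¹' {z})ᶜ) = 0 := by
          rw [hν_def, cond_apply hPzm, inter_compl_self, measure_empty, mul_zero]
        -- relation between restricted measures
        have hrestr : μ.restrict (S z) = μ (Z ⁻¹' {z}) • ν.restrict (S z) := by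
          rw [hν_def, ProbabilityTheory.cond, Measure.restrict_smul,
            Measure.restrict_restrict (hSm z), inter_eq_left.mpr inter_subset_right,
            smul_smul, ENNReal.mul_inv_cancel hz hzfin, one_smul]
        -- the stratum-z set in (T,D,X)-space
        set Az : Set (ℝ × E × F) := (fun y : ℝ × E × F => (y.1, y.2.1, y.2.2, z)) ⁻¹' A
          with hAz_def
        have hAzm : MeasurableSet Az :=
          (measurable_fst.prodMk (measurable_snd.fst.prodMk
            (measurable_snd.snd.prodMk measurable_const))) hA
        -- the product-space integrand
        set Φ : ℝ × (ℝ × E × F) → ℝ≥0∞ := fun p =>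
          Az.indicator (fun _ => 1) p.2 *
            (if min p.2.1 t ≤ p.1 then (g (min p.2.1 t, z))⁻¹ else 0) with hΦ_def
        have hΦm : Measurable Φ := by
          refine Measurable.mul ((measurable_one.indicator hAzm).comp measurable_snd) ?_
          refine Measurable.ite ?_ ?_ measurable_const
          · exact measurableSet_le (measurable_snd.fst.min measurable_const) measurable_fst
          · exact (hgmeas.comp
              ((measurable_snd.fst.min measurable_const).prodMk measurable_const)).inv
        -- ν-a.e., the indicator of S z times W equals Φ ∘ (C, Y)
        have hz_ae : ∀ᵐ ω ∂ν, Z ω = z := by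
          have : {ω | ¬ Z ω = z} = (Z ⁻¹' {z})ᶜ := by ext ω; simp
          rw [Filter.eventually_iff, ← compl_setOf, ← this] at *
          exact mem_ae_iff.mpr hνc
        have hae : (S z).indicator W =ᵐ[ν] fun ω => Φ (C ω, Y ω) := by
          filter_upwards [hz_ae] with ω hωz
          have hmem : ω ∈ S z ↔ Y ω ∈ Az := by
            simp only [hS_def, mem_inter_iff, mem_preimage, mem_singleton_iff, hωz,
              and_true, hAz_def, hV_def, hY_def]
          by_cases hA' : Y ω ∈ Az
          · have hωS : ω ∈ S z := hmem.mpr hA'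
            rw [indicator_of_mem hωS]
            show (if min (T ω) t ≤ C ω then (g (min (T ω) t, Z ω))⁻¹ else 0) =
              Az.indicator (fun _ => (1 : ℝ≥0∞)) (Y ω) *
                (if min (T ω) t ≤ C ω then (g (min (T ω) t, z))⁻¹ else 0)
            rw [indicator_of_mem hA', one_mul, hωz]
          · have hωS : ω ∉ S z := fun h => hA' (hmem.mp h)
            rw [indicator_of_notMem hωS]
            show (0 : ℝ≥0∞) =
              Az.indicator (fun _ => (1 : ℝ≥0∞)) (Y ω) *
                (if min (T ω) t ≤ C ω then (g (min (T ω) t, z))⁻¹ else 0)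
            rw [indicator_of_notMem hA', zero_mul]
        -- the conditional independence
        haveI : IsProbabilityMeasure (ν.map C) := Measure.isProbabilityMeasure_map hC.aemeasurable
        haveI : IsProbabilityMeasure (ν.map Y) := Measure.isProbabilityMeasure_map hYm.aemeasurable
        have hprod : ν.map (fun ω => (C ω, Y ω)) = (ν.map C).prod (ν.map Y) :=
          (indepFun_iff_map_prod_eq_prod_map_map hC.aemeasurable hYm.aemeasurable).mp
            (hindep z hzpos)
        -- inner integral equals the indicator
        have hinner : ∀ y : ℝ × E × F,
            ∫⁻ c, Φ (c, y) ∂(ν.map C) = Az.indicator (fun _ => 1) y := by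
          intro y
          have hψeq : (fun c => if min y.1 t ≤ c then (g (min y.1 t, z))⁻¹ else 0) =
              (Ici (min y.1 t)).indicator fun _ => (g (min y.1 t, z))⁻¹ := by
            funext c; simp [Set.indicator, mem_Ici]
          have hmap : (ν.map C) (Ici (min y.1 t)) = g (min y.1 t, z) := by
            rw [Measure.map_apply hC measurableSet_Ici]
            rfl
          have hψ : ∫⁻ c, (if min y.1 t ≤ c then (g (min y.1 t, z))⁻¹ else 0) ∂(ν.map C)
              = 1 := by
            rw [hψeq, lintegral_indicator_const measurableSet_Ici, hmap]
            exact ENNReal.inv_mul_cancel (hgpos z hz _ (min_le_right _ _)) (ne_of_lt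
              (lt_of_le_of_lt (hgle _) (by norm_num)))
          have hψmeas :
              Measurable fun c : ℝ => if min y.1 t ≤ c then (g (min y.1 t, z))⁻¹ else 0 := by
            rw [hψeq]; exact measurable_const.indicator measurableSet_Ici
          calc ∫⁻ c, Φ (c, y) ∂(ν.map C)
              = Az.indicator (fun _ => 1) y *
                ∫⁻ c, (if min y.1 t ≤ c then (g (min y.1 t, z))⁻¹ else 0) ∂(ν.map C) := by
                simp only [hΦ_def]
                exact lintegral_const_mul _ hψmeas
            _ = Az.indicator (fun _ => 1) y := by rw [hψ, mul_one]
        -- ν-measure of sets is concentrated on the stratum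
        have hconc : ∀ B : Set Ω, ν B = ν (B ∩ Z ⁻¹' {z}) := by
          intro B
          refine le_antisymm ?_ (measure_mono inter_subset_left)
          calc ν B ≤ ν ((B ∩ Z ⁻¹' {z}) ∪ (Z ⁻¹' {z})ᶜ) := measure_mono fun ω hω => by
                by_cases h : ω ∈ Z ⁻¹' {z}
                · exact Or.inl ⟨hω, h⟩
                · exact Or.inr h
            _ ≤ ν (B ∩ Z ⁻¹' {z}) + ν ((Z ⁻¹' {z})ᶜ) := measure_union_le _ _
            _ = ν (B ∩ Z ⁻¹' {z}) := by rw [hνc, add_zero]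
        have hsetseq : Y ⁻¹' Az ∩ Z ⁻¹' {z} = S z := by
          ext ω
          simp only [hS_def, mem_inter_iff, mem_preimage, mem_singleton_iff, hAz_def,
            hV_def, hY_def]
          constructor
          · rintro ⟨h1, h2⟩; exact ⟨by simpa [h2] using h1, h2⟩
          · rintro ⟨h1, h2⟩; exact ⟨by simpa [h2] using h1, h2⟩
        -- step B : the ν-integral
        have hstepB : ∫⁻ ω in S z, W ω ∂ν = ν (S z) := by
          calc ∫⁻ ω in S z, W ω ∂ν
              = ∫⁻ ω, (S z).indicator W ω ∂ν := (lintegral_indicator (hSm z) W).symm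
            _ = ∫⁻ ω, Φ (C ω, Y ω) ∂ν := lintegral_congr_ae hae
            _ = ∫⁻ p, Φ p ∂(ν.map fun ω => (C ω, Y ω)) :=
                (lintegral_map hΦm (hC.prodMk hYm)).symm
            _ = ∫⁻ p, Φ p ∂((ν.map C).prod (ν.map Y)) := by rw [hprod]
            _ = ∫⁻ y, ∫⁻ c, Φ (c, y) ∂(ν.map C) ∂(ν.map Y) :=
                lintegral_prod_symm Φ hΦm.aemeasurable
            _ = ∫⁻ y, Az.indicator (fun _ => 1) y ∂(ν.map Y) :=
                lintegral_congr fun y => hinner y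
            _ = (ν.map Y) Az := lintegral_indicator_one hAzm
            _ = ν (Y ⁻¹' Az) := Measure.map_apply hYm hAzm
            _ = ν (S z) := by rw [hconc (Y ⁻¹' Az), hsetseq]
        -- combine
        have hfinal : μ (Z ⁻¹' {z}) * ν (S z) = μ (S z) := by
          rw [hν_def, cond_apply hPzm, ← mul_assoc, ENNReal.mul_inv_cancel hz hzfin,
            one_mul, inter_eq_right.mpr inter_subset_right]
        calc ∫⁻ ω in S z, W ω ∂μ
            = ∫⁻ ω, W ω ∂(μ (Z ⁻¹' {z}) • ν.restrict (S z)) := by rw [← hrestr]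
          _ = μ (Z ⁻¹' {z}) * ∫⁻ ω in S z, W ω ∂ν := lintegral_smul_measure _ _
          _ = μ (Z ⁻¹' {z}) * ν (S z) := by rw [hstepB]
          _ = μ (S z) := hfinal
    calc ∫⁻ ω in V ⁻¹' A, W ω ∂μ
        = ∫⁻ ω in ⋃ z : ι, S z, W ω ∂μ := by rw [hUnion]
      _ = ∑' z : ι, ∫⁻ ω in S z, W ω ∂μ := lintegral_iUnion hSm hSd W
      _ = ∑' z : ι, μ (S z) := by simp_rw [hstrat]
      _ = μ (⋃ z : ι, S z) := (measure_iUnion hSd hSm).symm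
      _ = μ (V ⁻¹' A) := by rw [← hUnion]
  -- total integral is 1
  have htot : ∫⁻ ω, W ω ∂μ = 1 := by
    have := key univ ⟨univ, MeasurableSet.univ, by simp⟩
    simpa using this
  -- W is a.e. finite
  have hWfin : ∀ᵐ ω ∂μ, W ω ≠ ∞ := by
    have hnull : μ (⋃ z ∈ {z : ι | μ (Z ⁻¹' {z}) = 0}, Z ⁻¹' {z}) = 0 :=
      (measure_biUnion_null_iff (to_countable _)).mpr fun z hz => hz
    rw [ae_iff]
    refine measure_mono_null (fun ω hω => ?_) hnull
    simp only [mem_setOf_eq, not_not] at hω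
    by_cases hz : μ (Z ⁻¹' {Z ω}) = 0
    · exact mem_biUnion hz rfl
    · exfalso
      simp only [hW_def] at hω
      by_cases h : min (T ω) t ≤ C ω
      · rw [if_pos h] at hω
        exact hgpos (Z ω) hz _ (min_le_right _ _) (by
          simpa [ENNReal.inv_eq_top] using hω)
      · rw [if_neg h] at hω
        exact ENNReal.zero_ne_top hω
  -- Integrability of the weight
  have hfmeas : AEStronglyMeasurable (fun ω => (W ω).toReal) μ :=
    hWm.ennreal_toReal.aestronglyMeasurable
  have hfint : Integrable (fun ω => (W ω).toReal) μ := by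
    refine ⟨hfmeas, ?_⟩
    rw [hasFiniteIntegral_iff_ofReal
      (Filter.Eventually.of_forall fun ω => ENNReal.toReal_nonneg)]
    calc ∫⁻ ω, ENNReal.ofReal (W ω).toReal ∂μ
        ≤ ∫⁻ ω, W ω ∂μ := lintegral_mono fun ω => ENNReal.ofReal_toReal_le
      _ = 1 := htot
      _ < ∞ := by norm_num
  -- set-integral identity for the real weight
  have hseteq : ∀ s : Set Ω, MeasurableSet[MeasurableSpace.comap V inferInstance] s →
      μ s < ∞ → ∫ ω in s, (1 : ℝ) ∂μ = ∫ ω in s, (W ω).toReal ∂μ := by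
    intro s hs hμs
    have hsm0 : MeasurableSet s := hm s hs
    have h1 : ∫ ω in s, (1 : ℝ) ∂μ = (μ s).toReal := by
      rw [setIntegral_const, smul_eq_mul, mul_one]; rfl
    have h2 : ∫ ω in s, (W ω).toReal ∂μ = (∫⁻ ω in s, W ω ∂μ).toReal := by
      rw [integral_eq_lintegral_of_nonneg_ae
        (Filter.Eventually.of_forall fun ω => ENNReal.toReal_nonneg)
        (hfmeas.restrict)]
      congr 1
      refine lintegral_congr_ae ?_
      filter_upwards [ae_restrict_of_ae hWfin] with ω hω
      exact ENNReal.ofReal_toReal hω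
    rw [h1, h2, key s hs]
  -- conclude via uniqueness of conditional expectation
  haveI : SigmaFinite (μ.trim hm) := by infer_instance
  rw [hfW]
  refine (ae_eq_condExp_of_forall_setIntegral_eq hm hfint
    (fun s _ hμs => (integrableOn_const hμs.ne))
    hseteq ?_).symm
  exact StronglyMeasurable.aestronglyMeasurable stronglyMeasurable_const
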